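/- Let P_{S|X} be an invertible column-stochastic matrix, P_{T|X} a column-stochastic matrix, P_X a probability vector with positive entries, P_S := P_{S|X} P_X and P_T := P_{T|X} P_X, both with positive entries. Define W^{T;Y} := [√P_T]^{-1} P_{T|X} (P_{S|X})^{-1} [√P_S]. Then (W^{T;Y})^T W^{T;Y} √P_S = √P_S, i.e., √P_S is a right singular vector of W^{T;Y} with singular value 1. -/
import Mathlib


open Matrix in
/-- With `P_{S|X}` invertible column-stochastic, `P_{T|X}` column-stochastic,
`P_X` a positive probability vector, `P_S := P_{S|X} P_X`, `P_T := P_{T|X} P_X` positive,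
and `W^{T;Y} := [√P_T]⁻¹ P_{T|X} (P_{S|X})⁻¹ [√P_S]`, we have
`(W^{T;Y})ᵀ W^{T;Y} √P_S = √P_S`. -/
theorem stmt4 {n t : Type*} [Fintype n] [DecidableEq n] [Fintype t] [DecidableEq t]
    (PSX : Matrix n n ℝ) (hinv : IsUnit PSX.det)
    (hScol : ∀ x, ∑ s, PSX s x = 1)
    (PTX : Matrix t n ℝ) (hTcol : ∀ x, ∑ j, PTX j x = 1)
    (PX : n → ℝ) (hPXpos : ∀ x, 0 < PX x) (hPXsum : ∑ x, PX x = 1)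
    (PS : n → ℝ) (hPS : PS = PSX.mulVec PX) (hPSpos : ∀ s, 0 < PS s)
    (PT : t → ℝ) (hPT : PT = PTX.mulVec PX) (hPTpos : ∀ j, 0 < PT j)
    (W : Matrix t n ℝ)
    (hW : W = (Matrix.diagonal fun j => (Real.sqrt (PT j))⁻¹) * PTX * PSX⁻¹ *
        Matrix.diagonal fun s => Real.sqrt (PS s)) :
    (Wᵀ * W).mulVec (fun s => Real.sqrt (PS s)) = fun s => Real.sqrt (PS s) := by
  have hsq : (Matrix.diagonal fun s => Real.sqrt (PS s)).mulVec
      (fun s => Real.sqrt (PS s)) = PS := by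
    ext s
    rw [Matrix.mulVec_diagonal]
    exact Real.mul_self_sqrt (hPSpos s).le
  -- W *ᵥ √PS = √PT
  have h1 : W.mulVec (fun s => Real.sqrt (PS s)) = fun j => Real.sqrt (PT j) := by
    rw [hW, ← Matrix.mulVec_mulVec, hsq, hPS, ← Matrix.mulVec_mulVec (PSX *ᵥ PX),
      Matrix.mulVec_mulVec PX PSX⁻¹ PSX, Matrix.nonsing_inv_mul _ hinv, Matrix.one_mulVec,
      ← Matrix.mulVec_mulVec, ← hPT]
    ext j
    rw [Matrix.mulVec_diagonal]
    rw [inv_mul_eq_div, Real.div_sqrt]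
  -- 1 ᵥ* PSX⁻¹ = 1
  have hPSXone : (1 : n → ℝ) ᵥ* PSX = 1 := by
    ext x
    simp [Matrix.vecMul, dotProduct, hScol x]
  have hinvone : (1 : n → ℝ) ᵥ* PSX⁻¹ = 1 := by
    calc (1 : n → ℝ) ᵥ* PSX⁻¹ = ((1 : n → ℝ) ᵥ* PSX) ᵥ* PSX⁻¹ := by rw [hPSXone]
    _ = (1 : n → ℝ) ᵥ* (PSX * PSX⁻¹) := by rw [Matrix.vecMul_vecMul]
    _ = 1 := by rw [Matrix.mul_nonsing_inv _ hinv, Matrix.vecMul_one]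
  -- Wᵀ *ᵥ √PT = √PS
  have h2 : Wᵀ.mulVec (fun j => Real.sqrt (PT j)) = fun s => Real.sqrt (PS s) := by
    rw [Matrix.mulVec_transpose, hW]
    have hv1 : (fun j => Real.sqrt (PT j)) ᵥ*
        (Matrix.diagonal fun j => (Real.sqrt (PT j))⁻¹) = 1 := by
      ext j
      rw [Matrix.vecMul_diagonal]
      exact mul_inv_cancel₀ (Real.sqrt_pos.mpr (hPTpos j)).ne'
    have hv2 : (1 : t → ℝ) ᵥ* PTX = 1 := by
      ext x
      simp [Matrix.vecMul, dotProduct, hTcol x]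
    rw [← Matrix.vecMul_vecMul, ← Matrix.vecMul_vecMul, ← Matrix.vecMul_vecMul,
      hv1, hv2, hinvone]
    ext s
    simp [Matrix.vecMul_diagonal]
  rw [← Matrix.mulVec_mulVec, h1, h2]
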